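/- Let E be a countable set, let Q and Q̃ be irreducible, uniformly bounded intensity matrices on E, and let π and ν be invariant probability vectors for Q and Q̃ respectively. Define Λ₁(Q) = (1/2) inf_{i ≠ j} [ |Q(i,i) − Q(j,i)| + |Q(i,j) − Q(j,j)| − ∑_{s ≠ i, s ≠ j} |Q(i,s) − Q(j,s)| ]. If Λ₁(Q) > 0, then ‖ν − π‖ ≤ ‖Q̃ − Q‖ / Λ₁(Q). -/

import Mathlib

open scoped Classical ENNReal NNReal
open Filter MeasureTheory

noncomputable section

variable {E : Type*}

def matPow (P : E → E → ℝ) : ℕ → E → E → ℝ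
  | 0 => fun i j => if i = j then (1 : ℝ) else 0
  | n + 1 => fun i j => ∑' k, matPow P n i k * P k j

def IsStochastic (P : E → E → ℝ) : Prop :=
  (∀ i j, 0 ≤ P i j) ∧ ∀ i, ∑' j, P i j = 1

def IsIrred (P : E → E → ℝ) : Prop :=
  ∀ i j, ∃ n, 1 ≤ n ∧ 0 < matPow P n i j

def IsProbVec (π : E → ℝ) : Prop :=
  (∀ i, 0 ≤ π i) ∧ ∑' i, π i = 1

def InvariantFor (π : E → ℝ) (P : E → E → ℝ) : Prop :=
  ∀ j, HasSum (fun i => π i * P i j) (π j)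

def vecNorm (μ : E → ℝ) : ℝ := ∑' i, |μ i|

def rowSumNorm (L : E → E → ℝ) : ℝ := ⨆ i, ∑' j, |L i j|

def ergCoeff (B : E → E → ℝ) : ℝ :=
  (1 / 2) * ⨆ p : E × E, ∑' k, |B p.1 k - B p.2 k|

def IsIntensity (Q : E → E → ℝ) : Prop :=
  (∀ i j, i ≠ j → 0 ≤ Q i j) ∧ ∀ i, HasSum (Q i) 0

def UnifBdd (Q : E → E → ℝ) : Prop := ∃ M : ℝ, ∀ i, -Q i i ≤ M

def QIrred (Q : E → E → ℝ) : Prop :=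
  ∀ i j, i ≠ j → ∃ (r : ℕ) (k : ℕ → E), 1 ≤ r ∧ k 0 = i ∧ k r = j ∧
    ∀ s < r, 0 < Q (k s) (k (s + 1))

def QInvariant (π : E → ℝ) (Q : E → E → ℝ) : Prop :=
  ∀ j, HasSum (fun i => π i * Q i j) 0

def transP (Q : E → E → ℝ) (t : ℝ) : E → E → ℝ :=
  fun i j => ∑' n : ℕ, t ^ n / (Nat.factorial n : ℝ) * matPow Q n i j

def qErgCoeff (Q : E → E → ℝ) : ℝ :=
  (1 / 2) * ⨅ p : {p : E × E // p.1 ≠ p.2},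
    (|Q p.val.1 p.val.1 - Q p.val.2 p.val.1| + |Q p.val.1 p.val.2 - Q p.val.2 p.val.2|
      - ∑' s : E, if s ≠ p.val.1 ∧ s ≠ p.val.2 then |Q p.val.1 s - Q p.val.2 s| else 0)

def vVecNorm (V : E → ℝ) (μ : E → ℝ) : ℝ≥0∞ := ∑' i, ENNReal.ofReal (|μ i| * V i)

def vMatNorm (V : E → ℝ) (L : E → E → ℝ) : ℝ≥0∞ :=
  ⨆ i, (∑' j, ENNReal.ofReal (|L i j| * V j)) / ENNReal.ofReal (V i)

def vOneNorm (V : E → ℝ) : ℝ≥0∞ := ⨆ i, 1 / ENNReal.ofReal (V i)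

lemma intensity_facts {Q : E → E → ℝ} (hQ : IsIntensity Q) (i : E) :
    Q i i ≤ 0 ∧ (∀ j, |Q i j| ≤ -Q i i) ∧ HasSum (fun j => |Q i j|) (-(2 * Q i i)) := by
  obtain ⟨hoff, hsum⟩ := hQ
  have hone : HasSum (fun k => if k = i then Q i i else 0) (Q i i) := hasSum_ite_eq i (Q i i)
  have hf : HasSum (fun k => if k = i then 0 else Q i k) (-Q i i) := by
    have h2 := (hsum i).sub hone
    have h3 : (fun k => Q i k - if k = i then Q i i else 0)
        = fun k => if k = i then 0 else Q i k := by
      funext k; by_cases h : k = i <;> simp [h]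
    rw [h3] at h2; simpa using h2
  have hfnn : ∀ k, 0 ≤ (if k = i then 0 else Q i k) := by
    intro k; by_cases h : k = i
    · simp [h]
    · simpa [h] using hoff i k (fun hik => h hik.symm)
  have hdiag : Q i i ≤ 0 := by
    have h0 : 0 ≤ -Q i i := hf.nonneg hfnn
    linarith
  have hle : ∀ j, |Q i j| ≤ -Q i i := by
    intro j
    by_cases h : j = i
    · subst h; rw [abs_of_nonpos hdiag]
    · rw [abs_of_nonneg (hoff i j (fun hij => h hij.symm))]
      have := le_hasSum hf j (fun k _ => hfnn k)
      simpa [h] using this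
  refine ⟨hdiag, hle, ?_⟩
  have h4 : HasSum (fun k => (if k = i then 0 else Q i k) + (if k = i then -Q i i else 0))
      (-Q i i + -Q i i) := hf.add (hasSum_ite_eq i (-Q i i))
  have h5 : (fun k => (if k = i then 0 else Q i k) + (if k = i then -Q i i else 0))
      = fun j => |Q i j| := by
    funext k; by_cases h : k = i
    · simp [h, abs_of_nonpos hdiag]
    · simp [h, abs_of_nonneg (hoff i k (fun hik => h hik.symm))]
  rw [h5] at h4; convert h4 using 1; ring

lemma fubini_nonneg {α β : Type*} {f : α → β → ℝ} (h0 : ∀ a b, 0 ≤ f a b)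
    (h1 : ∀ a, Summable (f a)) {C : α → ℝ} (h2 : ∀ a, ∑' b, f a b ≤ C a) (hC : Summable C) :
    Summable (fun p : α × β => f p.1 p.2) ∧ (∀ b, Summable fun a => f a b) ∧
      Summable (fun b => ∑' a, f a b) ∧ (∑' b, ∑' a, f a b) = ∑' a, ∑' b, f a b := by
  have hmarg : Summable fun a => ∑' b, f a b :=
    Summable.of_nonneg_of_le (fun a => tsum_nonneg (h0 a)) h2 hC
  have hprod : Summable (fun p : α × β => f p.1 p.2) :=
    (summable_prod_of_nonneg (fun p => h0 p.1 p.2)).2 ⟨h1, hmarg⟩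
  have hswap : Summable (fun p : β × α => f p.2 p.1) := hprod.prod_symm
  have hcol := (summable_prod_of_nonneg (fun p : β × α => h0 p.2 p.1)).1 hswap
  exact ⟨hprod, hcol.1, hcol.2, Summable.tsum_comm' hprod h1 hcol.1⟩

set_option maxHeartbeats 2000000 in
lemma keyIneq (Q : E → E → ℝ) (hQ : IsIntensity Q) (M : ℝ) (hM0 : 0 ≤ M)
    (hM : ∀ i, -Q i i ≤ M)
    (hbdd : BddBelow (Set.range fun p : {p : E × E // p.1 ≠ p.2} =>
      (|Q p.val.1 p.val.1 - Q p.val.2 p.val.1| + |Q p.val.1 p.val.2 - Q p.val.2 p.val.2|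
        - ∑' s : E, if s ≠ p.val.1 ∧ s ≠ p.val.2 then |Q p.val.1 s - Q p.val.2 s| else 0)))
    (μ : E → ℝ) (hμabs : Summable fun i => |μ i|) (hμ0 : HasSum μ 0) :
    qErgCoeff Q * vecNorm μ ≤ ∑' s, |∑' i, μ i * Q i s| := by
  classical
  set Λ := qErgCoeff Q with hΛ
  have hdiag : ∀ i, Q i i ≤ 0 := fun i => (intensity_facts hQ i).1
  have habs : ∀ i j, |Q i j| ≤ -Q i i := fun i j => (intensity_facts hQ i).2.1 j
  have hleQ : ∀ i j, |Q i j| ≤ M := fun i j => (habs i j).trans (hM i)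
  have hrow : ∀ i, HasSum (fun s => |Q i s|) (-(2 * Q i i)) := fun i => (intensity_facts hQ i).2.2
  have hrowS : ∀ i, Summable fun s => |Q i s| := fun i => (hrow i).summable
  have hμ : Summable μ := summable_abs_iff.mp hμabs
  set T := ∑' i, |μ i| with hTdef
  have hT : HasSum (fun i => |μ i|) T := hμabs.hasSum
  have hT0 : 0 ≤ T := hT.nonneg fun i => abs_nonneg _
  have hVN : vecNorm μ = T := rfl
  set P := fun i => (|μ i| + μ i) / 2 with hPdef
  set N := fun i => (|μ i| - μ i) / 2 with hNdef
  have hP : HasSum P (T / 2) := by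
    have h := (hT.add hμ0).div_const 2
    simpa [hPdef] using h
  have hN : HasSum N (T / 2) := by
    have h := (hT.sub hμ0).div_const 2
    simpa [hNdef] using h
  have hPnn : ∀ i, 0 ≤ P i := fun i => by
    have := neg_abs_le (μ i); simp only [hPdef]; linarith
  have hNnn : ∀ i, 0 ≤ N i := fun i => by
    have := le_abs_self (μ i); simp only [hNdef]; linarith
  have hPN : ∀ i, P i * N i = 0 := fun i => by
    have h1 : P i * N i = (|μ i| ^ 2 - μ i ^ 2) / 4 := by simp only [hPdef, hNdef]; ring
    rw [h1, sq_abs]; ring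
  rcases eq_or_lt_of_le hT0 with hT0' | hTpos
  · have hz : Λ * vecNorm μ = 0 := by rw [hVN, ← hT0']; ring
    rw [hz]
    exact tsum_nonneg fun s => abs_nonneg _
  
  -- main case: T > 0
  set m := T / 2 with hm
  have hmpos : 0 < m := half_pos hTpos
  set c := fun p : E × E => P p.1 * N p.2 / m with hc
  have hcnn : ∀ p, 0 ≤ c p := fun p => div_nonneg (mul_nonneg (hPnn _) (hNnn _)) hmpos.le
  have hcsum0 : Summable fun p : E × E => P p.1 * N p.2 :=
    hP.summable.mul_of_nonneg hN.summable hPnn hNnn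
  have hchs : HasSum c m := by
    have h1 : HasSum (fun p : E × E => P p.1 * N p.2) (m * m) := by
      have := hP.mul hN hcsum0
      simpa [hm] using this
    have h2 := h1.div_const m
    rw [mul_div_assoc, div_self hmpos.ne', mul_one] at h2
    exact h2
  have hcS : Summable c := hchs.summable
  have hc0diag : ∀ p : E × E, p.1 = p.2 → c p = 0 := by
    intro p hp
    simp only [hc]
    rw [hp, hPN p.2, zero_div]
  -- the sign-indicator kernel g
  set g := fun (p : E × E) (s : E) =>
    if p.1 = s ∨ p.2 = s then |Q p.1 s - Q p.2 s| else -|Q p.1 s - Q p.2 s| with hg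
  have hDle : ∀ (p : E × E) (s : E), |Q p.1 s - Q p.2 s| ≤ |Q p.1 s| + |Q p.2 s| := by
    intro p s
    exact abs_sub _ _
  have hgabs : ∀ (p : E × E) (s : E), |g p s| = |Q p.1 s - Q p.2 s| := by
    intro p s
    simp only [hg]
    split <;> simp [abs_abs]
  -- master bound F
  set F := fun (p : E × E) (s : E) => c p * (|Q p.1 s| + |Q p.2 s|) with hF
  have hFnn : ∀ p s, 0 ≤ F p s := fun p s =>
    mul_nonneg (hcnn p) (add_nonneg (abs_nonneg _) (abs_nonneg _))
  have hFrowS : ∀ p : E × E, Summable fun s => F p s :=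
    fun p => ((hrowS p.1).add (hrowS p.2)).mul_left (c p)
  have hFrowval : ∀ p : E × E, ∑' s, F p s ≤ c p * (4 * M) := by
    intro p
    simp only [hF]
    rw [tsum_mul_left]
    refine mul_le_mul_of_nonneg_left ?_ (hcnn p)
    rw [((hrow p.1).add (hrow p.2)).tsum_eq]
    have h1 := hM p.1; have h2 := hM p.2; linarith
  obtain ⟨hFprod, hFcol, hFcolS, _⟩ :=
    fubini_nonneg hFnn hFrowS hFrowval (hcS.mul_right (4 * M))
  -- the signed kernel f
  set f := fun (p : E × E) (s : E) => c p * g p s with hf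
  have hfabs : ∀ p s, |f p s| = c p * |Q p.1 s - Q p.2 s| := by
    intro p s
    simp only [hf]
    rw [abs_mul, abs_of_nonneg (hcnn p), hgabs]
  have hfleF : ∀ p s, |f p s| ≤ F p s := by
    intro p s
    rw [hfabs]
    exact mul_le_mul_of_nonneg_left (hDle p s) (hcnn p)
  have hfS1 : ∀ p, Summable (f p) := fun p =>
    summable_abs_iff.mp (Summable.of_nonneg_of_le (fun s => abs_nonneg _)
      (fun s => hfleF p s) (hFrowS p))
  have hfS2 : ∀ s, Summable fun p => f p s := by
    intro s
    refine summable_abs_iff.mp (Summable.of_nonneg_of_le (fun p => abs_nonneg _)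
      (fun p => ?_) (hcS.mul_right (2 * M)))
    rw [hfabs]
    refine mul_le_mul_of_nonneg_left ((hDle p s).trans ?_) (hcnn p)
    have := hleQ p.1 s; have := hleQ p.2 s; linarith
  have hfuncurry : Summable (Function.uncurry f) :=
    summable_abs_iff.mp (Summable.of_nonneg_of_le (fun pr => abs_nonneg _)
      (fun pr => hfleF pr.1 pr.2) hFprod)
  
  -- Step A: the pair sum represents mu * Q
  have hPQ : ∀ s, Summable fun i => P i * Q i s := by
    intro s
    refine summable_abs_iff.mp (Summable.of_nonneg_of_le (fun i => abs_nonneg _)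
      (fun i => ?_) (hP.summable.mul_right M))
    rw [abs_mul, abs_of_nonneg (hPnn i)]
    exact mul_le_mul_of_nonneg_left (hleQ i s) (hPnn i)
  have hNQ : ∀ s, Summable fun i => N i * Q i s := by
    intro s
    refine summable_abs_iff.mp (Summable.of_nonneg_of_le (fun i => abs_nonneg _)
      (fun i => ?_) (hN.summable.mul_right M))
    rw [abs_mul, abs_of_nonneg (hNnn i)]
    exact mul_le_mul_of_nonneg_left (hleQ i s) (hNnn i)
  have hGhs : ∀ s, HasSum (fun p : E × E => c p * (Q p.1 s - Q p.2 s)) (∑' i, μ i * Q i s) := by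
    intro s
    have hsum1 : Summable (fun p : E × E => (P p.1 * Q p.1 s) * N p.2) := by
      refine summable_abs_iff.mp (Summable.of_nonneg_of_le (fun p => abs_nonneg _)
        (fun p => ?_)
        ((hP.summable.mul_right M).mul_of_nonneg hN.summable
          (fun i => mul_nonneg (hPnn i) hM0) hNnn))
      rw [abs_mul, abs_mul, abs_of_nonneg (hPnn _), abs_of_nonneg (hNnn _)]
      exact mul_le_mul_of_nonneg_right
        (mul_le_mul_of_nonneg_left (hleQ _ s) (hPnn _)) (hNnn _)
    have hsum2 : Summable (fun p : E × E => P p.1 * (N p.2 * Q p.2 s)) := by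
      refine summable_abs_iff.mp (Summable.of_nonneg_of_le (fun p => abs_nonneg _)
        (fun p => ?_)
        (hP.summable.mul_of_nonneg (hN.summable.mul_right M) hPnn
          (fun i => mul_nonneg (hNnn i) hM0)))
      rw [abs_mul, abs_mul, abs_of_nonneg (hPnn _), abs_of_nonneg (hNnn _)]
      exact mul_le_mul_of_nonneg_left
        (mul_le_mul_of_nonneg_left (hleQ _ s) (hNnn _)) (hPnn _)
    have h1 : HasSum (fun p : E × E => (P p.1 * Q p.1 s) * N p.2)
        ((∑' i, P i * Q i s) * (T / 2)) := (hPQ s).hasSum.mul hN hsum1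
    have h2 : HasSum (fun p : E × E => P p.1 * (N p.2 * Q p.2 s))
        ((T / 2) * ∑' j, N j * Q j s) := hP.mul (hNQ s).hasSum hsum2
    have h3 := (h1.sub h2).div_const m
    have hfun : (fun p : E × E => ((P p.1 * Q p.1 s) * N p.2 - P p.1 * (N p.2 * Q p.2 s)) / m)
        = fun p => c p * (Q p.1 s - Q p.2 s) := by
      funext p
      simp only [hc]
      field_simp
    rw [hfun] at h3
    have h4 : HasSum (fun i => μ i * Q i s) ((∑' i, P i * Q i s) - ∑' j, N j * Q j s) := by
      have h5 := (hPQ s).hasSum.sub (hNQ s).hasSum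
      have h6 : (fun i => P i * Q i s - N i * Q i s) = fun i => μ i * Q i s := by
        funext i
        simp only [hPdef, hNdef]
        ring
      rwa [h6] at h5
    have hval : ((∑' i, P i * Q i s) * (T / 2) - (T / 2) * ∑' j, N j * Q j s) / m
        = ∑' i, μ i * Q i s := by
      rw [h4.tsum_eq, hm]
      have hT2 : (T : ℝ) / 2 ≠ 0 := hmpos.ne'
      field_simp
    rwa [hval] at h3

  
  -- Step B: per-coordinate lower bound
  have hAB : ∀ s, ∑' p : E × E, f p s ≤ |∑' i, μ i * Q i s| := by
    intro s
    set t := fun p : E × E => c p * (if p.1 = s ∨ p.2 = s then Q p.1 s - Q p.2 s else 0) with ht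
    set y := fun p : E × E => c p * (if p.1 = s ∨ p.2 = s then 0 else Q p.1 s - Q p.2 s) with hy
    set Aterm := fun p : E × E =>
      c p * (if p.1 = s ∨ p.2 = s then |Q p.1 s - Q p.2 s| else 0) with hA
    set Bterm := fun p : E × E =>
      c p * (if p.1 = s ∨ p.2 = s then 0 else |Q p.1 s - Q p.2 s|) with hB
    have hcmp : ∀ u : (E × E) → ℝ, (∀ p, |u p| ≤ F p s) → Summable u := fun u hu =>
      summable_abs_iff.mp (Summable.of_nonneg_of_le (fun p => abs_nonneg _) hu (hFcol s))
    have hbody : ∀ (p : E × E) (v : ℝ), |v| ≤ |Q p.1 s - Q p.2 s| →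
        |c p * v| ≤ F p s := by
      intro p v hv
      rw [abs_mul, abs_of_nonneg (hcnn p)]
      exact mul_le_mul_of_nonneg_left (hv.trans (hDle p s)) (hcnn p)
    have htS : Summable t := hcmp t fun p => hbody p _ (by
      by_cases h : p.1 = s ∨ p.2 = s <;> simp [h])
    have hyS : Summable y := hcmp y fun p => hbody p _ (by
      by_cases h : p.1 = s ∨ p.2 = s <;> simp [h])
    have hAtermS : Summable Aterm := hcmp Aterm fun p => hbody p _ (by
      by_cases h : p.1 = s ∨ p.2 = s <;> simp [h])
    have hBtermS : Summable Bterm := hcmp Bterm fun p => hbody p _ (by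
      by_cases h : p.1 = s ∨ p.2 = s <;> simp [h])
    have hAnnp : ∀ p, 0 ≤ Aterm p := fun p => mul_nonneg (hcnn p) (by
      by_cases h : p.1 = s ∨ p.2 = s <;> simp [h])
    have hsum_eq : (∑' p, t p) + (∑' p, y p) = ∑' i, μ i * Q i s := by
      have h1 : HasSum (fun p => t p + y p) ((∑' p, t p) + (∑' p, y p)) :=
        htS.hasSum.add hyS.hasSum
      have h2 : (fun p : E × E => t p + y p) = fun p => c p * (Q p.1 s - Q p.2 s) := by
        funext p
        by_cases h : p.1 = s ∨ p.2 = s <;> simp [ht, hy, h] <;> ring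
      rw [h2] at h1
      exact h1.unique (hGhs s)
    have hynorm : ∀ p, ‖y p‖ = Bterm p := by
      intro p
      simp only [hy, hB, Real.norm_eq_abs, abs_mul, abs_of_nonneg (hcnn p)]
      by_cases h : p.1 = s ∨ p.2 = s <;> simp [h]
    have hyB : |∑' p, y p| ≤ ∑' p, Bterm p := by
      have h9 := norm_tsum_le_tsum_norm (f := y)
        (hBtermS.congr fun p => (hynorm p).symm)
      rw [Real.norm_eq_abs] at h9
      exact h9.trans_eq (tsum_congr hynorm)
    have hXA : |∑' p, t p| = ∑' p, Aterm p := by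
      by_cases hNs : N s = 0
      · have hneg : ∀ p, -t p = Aterm p := by
          intro p
          by_cases h2 : p.2 = s
          · have hc0 : c p = 0 := by
              simp only [hc]; rw [h2, hNs]; ring
            simp [ht, hA, hc0]
          · by_cases h1 : p.1 = s
            · have hD : Q p.1 s - Q p.2 s ≤ 0 := by
                rw [h1]
                have hd := hdiag s
                have ho := hQ.1 p.2 s h2
                linarith
              simp only [ht, hA, if_pos (Or.inl h1)]
              rw [abs_of_nonpos hD]; ring
            · have hcond : ¬(p.1 = s ∨ p.2 = s) := by tauto
              simp [ht, hA, hcond]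
        have hle0 : ∀ p, t p ≤ 0 := fun p => by
          have h10 := hneg p; have h11 := hAnnp p; linarith
        have h5 : ∑' p, t p ≤ 0 := tsum_nonpos hle0
        have h6 : ∑' p, Aterm p = -∑' p, t p := by
          rw [← tsum_neg]; exact tsum_congr fun p => (hneg p).symm
        rw [abs_of_nonpos h5, h6]
      · have hPs : P s = 0 := by
          rcases mul_eq_zero.mp (hPN s) with h | h
          exacts [h, absurd h hNs]
        have heq : ∀ p, t p = Aterm p := by
          intro p
          by_cases h1 : p.1 = s
          · have hc0 : c p = 0 := by
              simp only [hc]; rw [h1, hPs]; ring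
            simp [ht, hA, hc0]
          · by_cases h2 : p.2 = s
            · have hD : 0 ≤ Q p.1 s - Q p.2 s := by
                rw [h2]
                have hd := hdiag s
                have ho := hQ.1 p.1 s h1
                linarith
              simp only [ht, hA, if_pos (Or.inr h2)]
              rw [abs_of_nonneg hD]
            · have hcond : ¬(p.1 = s ∨ p.2 = s) := by tauto
              simp [ht, hA, hcond]
        have h5 : ∑' p, t p = ∑' p, Aterm p := tsum_congr heq
        rw [h5, abs_of_nonneg (tsum_nonneg hAnnp)]
    have hfsplit : ∑' p : E × E, f p s = (∑' p, Aterm p) - ∑' p, Bterm p := by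
      have h7 : HasSum (fun p => Aterm p - Bterm p) ((∑' p, Aterm p) - ∑' p, Bterm p) :=
        hAtermS.hasSum.sub hBtermS.hasSum
      have h8 : (fun p : E × E => Aterm p - Bterm p) = fun p => f p s := by
        funext p
        by_cases h : p.1 = s ∨ p.2 = s <;> simp [hA, hB, hf, hg, h] <;> ring
      rw [h8] at h7; exact h7.tsum_eq
    have htri : |∑' p, t p| ≤ |(∑' p, t p) + (∑' p, y p)| + |∑' p, y p| := by
      have h12 := abs_add_le ((∑' p, t p) + (∑' p, y p)) (-(∑' p, y p))
      simpa using h12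
    rw [hsum_eq] at htri
    rw [hfsplit]
    rw [hXA] at htri
    linarith

  
  -- lam bound
  have hgsummable : ∀ p : E × E, Summable fun s => g p s := by
    intro p
    refine summable_abs_iff.mp (Summable.of_nonneg_of_le (fun s => abs_nonneg _)
      (fun s => ?_) ((hrowS p.1).add (hrowS p.2)))
    rw [hgabs]; exact hDle p s
  have hgrowle : ∀ p : E × E, |∑' s, g p s| ≤ 4 * M := by
    intro p
    have h1 := norm_tsum_le_tsum_norm (f := fun s => g p s)
      (((hrowS p.1).add (hrowS p.2)).of_nonneg_of_le (fun s => norm_nonneg _)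
        (fun s => by rw [Real.norm_eq_abs, hgabs]; exact hDle p s))
    rw [Real.norm_eq_abs] at h1
    refine h1.trans ?_
    have h2 : ∑' s, ‖g p s‖ ≤ ∑' s, (|Q p.1 s| + |Q p.2 s|) := by
      refine Summable.tsum_le_tsum (fun s => ?_) ?_ ((hrowS p.1).add (hrowS p.2))
      · rw [Real.norm_eq_abs, hgabs]; exact hDle p s
      · exact ((hrowS p.1).add (hrowS p.2)).of_nonneg_of_le (fun s => norm_nonneg _)
          (fun s => by rw [Real.norm_eq_abs, hgabs]; exact hDle p s)
    refine h2.trans ?_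
    rw [((hrow p.1).add (hrow p.2)).tsum_eq]
    have h3 := hM p.1; have h4 := hM p.2; linarith
  have hlam : ∀ p : E × E, p.1 ≠ p.2 → 2 * Λ ≤ ∑' s, g p s := by
    intro p hp
    have e1 : HasSum (fun s => if s = p.1 then |Q p.1 p.1 - Q p.2 p.1| else 0)
        (|Q p.1 p.1 - Q p.2 p.1|) := hasSum_ite_eq _ _
    have e2 : HasSum (fun s => if s = p.2 then |Q p.1 p.2 - Q p.2 p.2| else 0)
        (|Q p.1 p.2 - Q p.2 p.2|) := hasSum_ite_eq _ _
    have e3 : Summable fun s => (if s ≠ p.1 ∧ s ≠ p.2 then |Q p.1 s - Q p.2 s| else 0) := by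
      refine ((hrowS p.1).add (hrowS p.2)).of_nonneg_of_le
        (fun s => by by_cases h : s ≠ p.1 ∧ s ≠ p.2 <;> simp [h]) (fun s => ?_)
      by_cases h : s ≠ p.1 ∧ s ≠ p.2
      · simpa [h] using hDle p s
      · simp only [h, if_false]
        exact add_nonneg (abs_nonneg _) (abs_nonneg _)
    have hgsplit : (fun s => g p s) = fun s =>
        ((if s = p.1 then |Q p.1 p.1 - Q p.2 p.1| else 0)
          + (if s = p.2 then |Q p.1 p.2 - Q p.2 p.2| else 0))
        - (if s ≠ p.1 ∧ s ≠ p.2 then |Q p.1 s - Q p.2 s| else 0) := by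
      funext s
      by_cases h1 : s = p.1
      · subst h1
        simp [hg, hp]
      · by_cases h2 : s = p.2
        · subst h2
          simp [hg, h1]
        · have hcond : ¬(p.1 = s ∨ p.2 = s) := by
            push_neg; exact ⟨fun h => h1 h.symm, fun h => h2 h.symm⟩
          simp [hg, hcond, h1, h2]
    have hghs : HasSum (fun s => g p s)
        (|Q p.1 p.1 - Q p.2 p.1| + |Q p.1 p.2 - Q p.2 p.2|
          - ∑' s, (if s ≠ p.1 ∧ s ≠ p.2 then |Q p.1 s - Q p.2 s| else 0)) := by
      rw [hgsplit]
      exact (e1.add e2).sub e3.hasSum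
    rw [hghs.tsum_eq]
    have h20 : 2 * Λ = ⨅ q : {q : E × E // q.1 ≠ q.2},
        (|Q q.val.1 q.val.1 - Q q.val.2 q.val.1| + |Q q.val.1 q.val.2 - Q q.val.2 q.val.2|
          - ∑' s : E, if s ≠ q.val.1 ∧ s ≠ q.val.2 then |Q q.val.1 s - Q q.val.2 s| else 0) := by
      rw [hΛ, qErgCoeff]; ring
    rw [h20]
    exact ciInf_le hbdd ⟨p, hp⟩
  -- assembling
  have hfmarg : ∀ p : E × E, ∑' s, f p s = c p * ∑' s, g p s := by
    intro p
    simp only [hf]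
    exact tsum_mul_left
  have hfmargS : Summable fun p : E × E => ∑' s, f p s := by
    refine summable_abs_iff.mp (Summable.of_nonneg_of_le (fun p => abs_nonneg _)
      (fun p => ?_) (hcS.mul_right (4 * M)))
    rw [hfmarg, abs_mul, abs_of_nonneg (hcnn p)]
    exact mul_le_mul_of_nonneg_left (hgrowle p) (hcnn p)
  have hstep1 : Λ * vecNorm μ ≤ ∑' p : E × E, ∑' s, f p s := by
    have h30 : Λ * vecNorm μ = ∑' p : E × E, c p * (2 * Λ) := by
      rw [hVN, tsum_mul_right, hchs.tsum_eq, hm]; ring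
    rw [h30]
    refine Summable.tsum_le_tsum (fun p => ?_) (hcS.mul_right _) hfmargS
    rw [hfmarg]
    by_cases hp : p.1 = p.2
    · rw [hc0diag p hp]; ring_nf; exact le_rfl
    · exact mul_le_mul_of_nonneg_left (hlam p hp) (hcnn p)
  have hstep2 : ∑' p : E × E, ∑' s, f p s = ∑' s, ∑' p : E × E, f p s :=
    (Summable.tsum_comm' hfuncurry hfS1 hfS2).symm
  have hGcol : ∀ s, |∑' i, μ i * Q i s| ≤ ∑' p : E × E, F p s := by
    intro s
    have h40 := norm_tsum_le_tsum_norm (f := fun p : E × E => c p * (Q p.1 s - Q p.2 s))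
      ((hFcol s).of_nonneg_of_le (fun p => norm_nonneg _) (fun p => by
        rw [Real.norm_eq_abs, abs_mul, abs_of_nonneg (hcnn p)]
        exact mul_le_mul_of_nonneg_left (hDle p s) (hcnn p)))
    rw [Real.norm_eq_abs, (hGhs s).tsum_eq] at h40
    refine h40.trans (Summable.tsum_le_tsum (fun p => ?_) ?_ (hFcol s))
    · rw [Real.norm_eq_abs, abs_mul, abs_of_nonneg (hcnn p)]
      exact mul_le_mul_of_nonneg_left (hDle p s) (hcnn p)
    · exact (hFcol s).of_nonneg_of_le (fun p => norm_nonneg _) (fun p => by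
        rw [Real.norm_eq_abs, abs_mul, abs_of_nonneg (hcnn p)]
        exact mul_le_mul_of_nonneg_left (hDle p s) (hcnn p))
  have hstep3 : ∑' s, ∑' p : E × E, f p s ≤ ∑' s, |∑' i, μ i * Q i s| := by
    refine Summable.tsum_le_tsum hAB ?_ ?_
    · refine summable_abs_iff.mp (Summable.of_nonneg_of_le (fun s => abs_nonneg _)
        (fun s => ?_) hFcolS)
      have h50 := norm_tsum_le_tsum_norm (f := fun p : E × E => f p s)
        ((hFcol s).of_nonneg_of_le (fun p => norm_nonneg _) (fun p => by
          rw [Real.norm_eq_abs]; exact hfleF p s))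
      rw [Real.norm_eq_abs] at h50
      refine h50.trans (Summable.tsum_le_tsum (fun p => ?_) ?_ (hFcol s))
      · rw [Real.norm_eq_abs]; exact hfleF p s
      · exact (hFcol s).of_nonneg_of_le (fun p => norm_nonneg _) (fun p => by
          rw [Real.norm_eq_abs]; exact hfleF p s)
    · exact Summable.of_nonneg_of_le (fun s => abs_nonneg _) hGcol hFcolS
  calc Λ * vecNorm μ ≤ ∑' p : E × E, ∑' s, f p s := hstep1
    _ = ∑' s, ∑' p : E × E, f p s := hstep2
    _ ≤ ∑' s, |∑' i, μ i * Q i s| := hstep3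

set_option maxHeartbeats 2000000 in
/-- if Λ₁(Q) > 0 then ‖ν − π‖ ≤ ‖Q̃ − Q‖/Λ₁(Q). -/
theorem stmt13 {E : Type*} [Countable E] (Q Qt : E → E → ℝ) (pi nu : E → ℝ)
    (hQ : IsIntensity Q) (hQt : IsIntensity Qt)
    (hQb : UnifBdd Q) (hQtb : UnifBdd Qt)
    (hQirr : QIrred Q) (hQtirr : QIrred Qt)
    (hpi : IsProbVec pi) (hnu : IsProbVec nu)
    (hpiinv : QInvariant pi Q) (hnuinv : QInvariant nu Qt)
    (hpos : 0 < qErgCoeff Q) :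
    vecNorm (fun i => nu i - pi i) ≤
      rowSumNorm (fun i j => Qt i j - Q i j) / qErgCoeff Q := by
  classical
  obtain ⟨M0, hM0'⟩ := hQb
  obtain ⟨M1, hM1'⟩ := hQtb
  set M := max M0 0 with hMdef
  set M' := max M1 0 with hM'def
  have hM : ∀ i, -Q i i ≤ M := fun i => (hM0' i).trans (le_max_left _ _)
  have hM' : ∀ i, -Qt i i ≤ M' := fun i => (hM1' i).trans (le_max_left _ _)
  have hMnn : (0 : ℝ) ≤ M := le_max_right _ _
  have hbdd : BddBelow (Set.range fun p : {p : E × E // p.1 ≠ p.2} =>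
      (|Q p.val.1 p.val.1 - Q p.val.2 p.val.1| + |Q p.val.1 p.val.2 - Q p.val.2 p.val.2|
        - ∑' s : E, if s ≠ p.val.1 ∧ s ≠ p.val.2 then |Q p.val.1 s - Q p.val.2 s| else 0)) := by
    by_contra hcon
    have h0 := Real.iInf_of_not_bddBelow hcon
    rw [qErgCoeff, h0] at hpos
    norm_num at hpos
  have hrowQ : ∀ i, HasSum (fun s => |Q i s|) (-(2 * Q i i)) :=
    fun i => (intensity_facts hQ i).2.2
  have hrowQt : ∀ i, HasSum (fun s => |Qt i s|) (-(2 * Qt i i)) :=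
    fun i => (intensity_facts hQt i).2.2
  have hleQ : ∀ i j, |Q i j| ≤ M := fun i j => ((intensity_facts hQ i).2.1 j).trans (hM i)
  have hpiS : Summable pi := by
    by_contra h
    have := hpi.2
    rw [tsum_eq_zero_of_not_summable h] at this
    norm_num at this
  have hnuS : Summable nu := by
    by_contra h
    have := hnu.2
    rw [tsum_eq_zero_of_not_summable h] at this
    norm_num at this
  have hpi1 : HasSum pi 1 := hpi.2 ▸ hpiS.hasSum
  have hnu1 : HasSum nu 1 := hnu.2 ▸ hnuS.hasSum
  set μ := fun i => nu i - pi i with hμdef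
  have hμ0 : HasSum μ 0 := by
    have h := hnu1.sub hpi1
    simpa using h
  have hμabs : Summable fun i => |μ i| := by
    refine Summable.of_nonneg_of_le (fun i => abs_nonneg _) (fun i => ?_) (hnuS.add hpiS)
    simpa [abs_of_nonneg (hnu.1 i), abs_of_nonneg (hpi.1 i)] using abs_sub (nu i) (pi i)
  have key := keyIneq Q hQ M hMnn hM hbdd μ hμabs hμ0
  set R := rowSumNorm (fun i j => Qt i j - Q i j) with hRdef
  have hΔrowS : ∀ i, Summable fun s => |Qt i s - Q i s| := by
    intro i
    refine Summable.of_nonneg_of_le (fun s => abs_nonneg _) (fun s => abs_sub _ _)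
      (((hrowQt i).summable).add (hrowQ i).summable)
  have hΔrow_le : ∀ i, ∑' s, |Qt i s - Q i s| ≤ 2 * M' + 2 * M := by
    intro i
    have h1 : ∑' s, |Qt i s - Q i s| ≤ ∑' s, (|Qt i s| + |Q i s|) :=
      Summable.tsum_le_tsum (fun s => abs_sub _ _) (hΔrowS i)
        (((hrowQt i).summable).add (hrowQ i).summable)
    refine h1.trans ?_
    rw [((hrowQt i).add (hrowQ i)).tsum_eq]
    have h2 := hM i; have h3 := hM' i; linarith
  have hRbddAbove : BddAbove (Set.range fun i => ∑' j, |Qt i j - Q i j|) := by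
    refine ⟨2 * M' + 2 * M, ?_⟩
    rintro x ⟨i, rfl⟩
    exact hΔrow_le i
  have hrowleR : ∀ i, ∑' j, |Qt i j - Q i j| ≤ R := by
    intro i
    exact le_ciSup hRbddAbove i
  -- Fubini for u i s = nu i * |Qt i s - Q i s|
  have hu0 : ∀ (i s : E), 0 ≤ nu i * |Qt i s - Q i s| :=
    fun i s => mul_nonneg (hnu.1 i) (abs_nonneg _)
  have hu1 : ∀ i, Summable fun s => nu i * |Qt i s - Q i s| :=
    fun i => (hΔrowS i).mul_left (nu i)
  have hu2 : ∀ i, ∑' s, nu i * |Qt i s - Q i s| ≤ nu i * (2 * M' + 2 * M) := by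
    intro i
    rw [tsum_mul_left]
    exact mul_le_mul_of_nonneg_left (hΔrow_le i) (hnu.1 i)
  obtain ⟨_, hucol, hucolS, huswap⟩ :=
    fubini_nonneg hu0 hu1 hu2 (hnuS.mul_right _)
  have humargS : Summable fun i => ∑' s, nu i * |Qt i s - Q i s| :=
    Summable.of_nonneg_of_le (fun i => tsum_nonneg (hu0 i)) hu2 (hnuS.mul_right _)
  have hGle : ∀ s, |∑' i, μ i * Q i s| ≤ ∑' i, nu i * |Qt i s - Q i s| := by
    intro s
    have h1 : Summable fun i => nu i * Q i s := by
      refine summable_abs_iff.mp (Summable.of_nonneg_of_le (fun i => abs_nonneg _)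
        (fun i => ?_) (hnuS.mul_right M))
      rw [abs_mul, abs_of_nonneg (hnu.1 i)]
      exact mul_le_mul_of_nonneg_left (hleQ i s) (hnu.1 i)
    have h2 : HasSum (fun i => μ i * Q i s) ((∑' i, nu i * Q i s) - 0) := by
      have h3 := h1.hasSum.sub (hpiinv s)
      have h4 : (fun i => nu i * Q i s - pi i * Q i s) = fun i => μ i * Q i s := by
        funext i; simp only [hμdef]; ring
      rwa [h4] at h3
    have h5 : HasSum (fun i => nu i * (Q i s - Qt i s)) ((∑' i, nu i * Q i s) - 0) := by
      have h6 := h1.hasSum.sub (hnuinv s)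
      have h7 : (fun i => nu i * Q i s - nu i * Qt i s) = fun i => nu i * (Q i s - Qt i s) := by
        funext i; ring
      rwa [h7] at h6
    rw [h2.tsum_eq, ← h5.tsum_eq]
    have hnrm : ∀ i, ‖nu i * (Q i s - Qt i s)‖ = nu i * |Qt i s - Q i s| := by
      intro i
      rw [Real.norm_eq_abs, abs_mul, abs_of_nonneg (hnu.1 i), abs_sub_comm]
    have h8 := norm_tsum_le_tsum_norm (f := fun i => nu i * (Q i s - Qt i s))
      ((hucol s).congr fun i => (hnrm i).symm)
    rw [Real.norm_eq_abs] at h8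
    exact h8.trans_eq (tsum_congr hnrm)
  have hGsummable : Summable fun s => |∑' i, μ i * Q i s| :=
    Summable.of_nonneg_of_le (fun s => abs_nonneg _) hGle hucolS
  have hchain : ∑' s, |∑' i, μ i * Q i s| ≤ R := by
    calc ∑' s, |∑' i, μ i * Q i s| ≤ ∑' s, ∑' i, nu i * |Qt i s - Q i s| :=
          Summable.tsum_le_tsum hGle hGsummable hucolS
      _ = ∑' i, ∑' s, nu i * |Qt i s - Q i s| := huswap
      _ = ∑' i, nu i * ∑' s, |Qt i s - Q i s| := tsum_congr fun i => tsum_mul_left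
      _ ≤ ∑' i, nu i * R := by
          refine Summable.tsum_le_tsum (fun i => mul_le_mul_of_nonneg_left (hrowleR i) (hnu.1 i))
            ?_ (hnuS.mul_right R)
          refine humargS.congr fun i => ?_
          rw [tsum_mul_left]
      _ = R := by rw [tsum_mul_right, hnu.2, one_mul]
  rw [le_div_iff₀ hpos]
  calc vecNorm μ * qErgCoeff Q = qErgCoeff Q * vecNorm μ := by ring
    _ ≤ ∑' s, |∑' i, μ i * Q i s| := key
    _ ≤ R := hchain

end
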